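/- Let q be a prime power, m ≥ 1, ℓ ≥ 1, and let n_1, …, n_ℓ ≥ 1 with n = n_1 + ⋯ + n_ℓ. Let a_1, …, a_ℓ ∈ F_{q^m} be nonzero and pairwise non-σ-conjugate (for i ≠ j there is no nonzero c ∈ F_{q^m} with a_i = c^{q−1} a_j), and for each l let β_{l,1}, …, β_{l,n_l} ∈ F_{q^m} be linearly independent over F_q. Then the n×n matrix whose entry in row i ∈ {0, …, n−1} and column φ(l,t) := t + n_1 + ⋯ + n_{l−1} is N_i(a_l β_{l,t}^{q−1}) = (a_l β_{l,t}^{q−1})^{(q^i−1)/(q−1)} is invertible; equivalently, the set of linearized Reed–Solomon code locators {a_l β_{l,t}^{q−1} : l ∈ {1,…,ℓ}, t ∈ {1,…,n_l}} is P-independent. -/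

import Mathlib

open Finset

-- truncated norm exponent arithmetic
lemma texp_succ {q : ℕ} (hq : 2 ≤ q) (i : ℕ) :
    (q ^ (i+1) - 1) / (q - 1) = (q ^ i - 1) / (q - 1) + q ^ i := by
  have hdvd : (q - 1) ∣ (q ^ i - 1) := by
    simpa using Nat.sub_dvd_pow_sub_pow q 1 i
  have h1 : 1 ≤ q ^ i := Nat.one_le_pow _ _ (by omega)
  have h2 : q ^ i ≤ q ^ (i+1) := Nat.pow_le_pow_right (by omega) (by omega)
  have key : (q - 1) * ((q ^ i - 1) / (q - 1) + q ^ i) = q ^ (i+1) - 1 := by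
    rw [Nat.mul_add, Nat.mul_div_cancel' hdvd]
    have : (q - 1) * q ^ i = q ^ (i+1) - q ^ i := by
      rw [Nat.sub_mul, one_mul, pow_succ, mul_comm]
    omega
  rw [← key, Nat.mul_div_cancel_left _ (by omega : 0 < q - 1)]

lemma texp_mul {q : ℕ} (hq : 2 ≤ q) (i : ℕ) :
    (q - 1) * ((q ^ i - 1) / (q - 1)) = q ^ i - 1 := by
  have hdvd : (q - 1) ∣ (q ^ i - 1) := by
    simpa using Nat.sub_dvd_pow_sub_pow q 1 i
  exact Nat.mul_div_cancel' hdvd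

section Frob
variable {q : ℕ} {Fq K : Type*} [Field Fq] [Fintype Fq] [Field K] [Algebra Fq K]

lemma aux_pow_q_smul (hq : Fintype.card Fq = q) (x : Fq) (β : K) (i : ℕ) :
    (x • β) ^ q ^ i = x • β ^ q ^ i := by
  rw [Algebra.smul_def, Algebra.smul_def, mul_pow, ← map_pow]
  congr 2
  rw [← hq, FiniteField.pow_card_pow]

lemma aux_pow_q_add (p s : ℕ) [Fact p.Prime] [CharP K p] (hqs : q = p ^ s)
    (x y : K) (i : ℕ) : (x + y) ^ q ^ i = x ^ q ^ i + y ^ q ^ i := by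
  rw [hqs, ← pow_mul, add_pow_char_pow, pow_mul]

lemma aux_pow_q_sub (p s : ℕ) [Fact p.Prime] [CharP K p] (hqs : q = p ^ s)
    (x y : K) (i : ℕ) : (x - y) ^ q ^ i = x ^ q ^ i - y ^ q ^ i := by
  rw [hqs, ← pow_mul, sub_pow_char_pow, pow_mul]

/-- The `Fq`-linear map `β ↦ aa * β ^ q - r * β`. -/
noncomputable def Tmap (q : ℕ) {Fq K : Type*} [Field Fq] [Fintype Fq] [Field K] [Algebra Fq K]
    (hq : Fintype.card Fq = q) (p s : ℕ) [Fact p.Prime] [CharP K p] (hqs : q = p ^ s)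
    (aa r : K) : K →ₗ[Fq] K where
  toFun β := aa * β ^ q - r * β
  map_add' x y := by
    have := aux_pow_q_add (q := q) p s hqs x y 1
    rw [pow_one] at this
    show aa * (x + y) ^ q - r * (x + y) = _
    rw [this]; ring
  map_smul' x β := by
    have halg : (algebraMap Fq K x) ^ q = algebraMap Fq K x := by
      rw [← map_pow, ← hq, FiniteField.pow_card]
    show aa * (x • β) ^ q - r * (x • β) = x • (aa * β ^ q - r * β)
    rw [Algebra.smul_def, Algebra.smul_def, mul_pow, halg]; ring

/-- if x^(q-1) = 1 then x is in the image of Fq. -/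
lemma aux_root_unity (hq : Fintype.card Fq = q) {x : K} (hx : x ^ (q - 1) = 1) :
    ∃ c : Fq, algebraMap Fq K c = x := by
  classical
  have hq2 : 2 ≤ q := hq ▸ Fintype.one_lt_card
  have hx0 : x ≠ 0 := by
    intro h; rw [h, zero_pow (by omega)] at hx; exact one_ne_zero hx.symm
  have hxq : x ^ q = x := by
    have : x ^ q = x ^ (q - 1) * x := by
      rw [← pow_succ]; congr 1; omega
    rw [this, hx, one_mul]
  -- roots of X^q - X
  set P : Polynomial K := Polynomial.X ^ q - Polynomial.X with hP
  have hdeg : P.natDegree = q := by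
    rw [hP, Polynomial.natDegree_sub_eq_left_of_natDegree_lt] <;>
      simp [Polynomial.natDegree_X_pow] <;> omega
  have hPne : P ≠ 0 := by
    intro h; rw [h] at hdeg; simp at hdeg; omega
  have himg : (Finset.univ.image (algebraMap Fq K)) ⊆ P.roots.toFinset := by
    intro y hy
    simp only [Finset.mem_image] at hy
    obtain ⟨c, _, rfl⟩ := hy
    rw [Multiset.mem_toFinset, Polynomial.mem_roots hPne]
    simp only [hP, Polynomial.IsRoot, Polynomial.eval_sub, Polynomial.eval_pow,
      Polynomial.eval_X]
    rw [← map_pow, ← hq, FiniteField.pow_card, sub_self]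
  have hcard : q ≤ (Finset.univ.image (algebraMap Fq K)).card := by
    rw [Finset.card_image_of_injective _ (algebraMap Fq K).injective]
    simp [hq]
  have hcard2 : P.roots.toFinset.card ≤ q := by
    calc P.roots.toFinset.card ≤ Multiset.card P.roots := P.roots.toFinset_card_le
    _ ≤ P.natDegree := P.card_roots' 
    _ = q := hdeg
  have heq : (Finset.univ.image (algebraMap Fq K)) = P.roots.toFinset :=
    Finset.eq_of_subset_of_card_le himg (by omega)
  have hxr : x ∈ P.roots.toFinset := by
    rw [Multiset.mem_toFinset, Polynomial.mem_roots hPne]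
    simp only [hP, Polynomial.IsRoot, Polynomial.eval_sub, Polynomial.eval_pow, Polynomial.eval_X]
    rw [hxq, sub_self]
  rw [← heq] at hxr
  simp only [Finset.mem_image] at hxr
  obtain ⟨c, _, hc⟩ := hxr
  exact ⟨c, hc⟩

end Frob

/-- Coefficients of the quotient upon right division by `x - r` in the skew polynomial ring. -/
noncomputable def bseq (q : ℕ) {K : Type*} [Field K] (c : ℕ → K) (r : K) (d : ℕ) : ℕ → K
  | i => if h : d < i then 0 else c (i+1) + bseq q c r d (i+1) * r ^ q ^ (i+1)
  termination_by i => d + 1 - i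
  decreasing_by omega

lemma bseq_gt {q : ℕ} {K : Type*} [Field K] (c : ℕ → K) (r : K) {d i : ℕ} (h : d < i) :
    bseq q c r d i = 0 := by rw [bseq]; simp [h]

lemma bseq_le {q : ℕ} {K : Type*} [Field K] (c : ℕ → K) (r : K) {d i : ℕ} (h : i ≤ d) :
    bseq q c r d i = c (i+1) + bseq q c r d (i+1) * r ^ q ^ (i+1) := by
  rw [bseq]; simp [Nat.not_lt.mpr h]

open Finset in
lemma telescope {K : Type*} [Field K] (d : ℕ) (c b ρ X : ℕ → K)
    (hb : ∀ i ≤ d, c (i+1) = b i - b (i+1) * ρ (i+1)) (htop : b (d+1) = 0) :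
    ∑ i ∈ Finset.range (d+2), c i * X i
      = ∑ j ∈ Finset.range (d+1), (b j * X (j+1) - b j * (ρ j * X j))
        + (c 0 + b 0 * ρ 0) * X 0 := by
  have h1 : ∑ i ∈ range (d+2), c i * X i
      = ∑ i ∈ range (d+1), (b i * X (i+1) - b (i+1) * ρ (i+1) * X (i+1)) + c 0 * X 0 := by
    rw [Finset.sum_range_succ']
    congr 1
    refine Finset.sum_congr rfl fun i hi => ?_
    rw [hb i (Nat.lt_succ_iff.mp (Finset.mem_range.mp hi)), sub_mul]
  have h2 : ∑ i ∈ range (d+1), b (i+1) * ρ (i+1) * X (i+1)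
      = ∑ j ∈ range (d+1), b j * ρ j * X j - b 0 * ρ 0 * X 0 := by
    have := Finset.sum_range_succ' (fun j => b j * ρ j * X j) (d+1)
    rw [Finset.sum_range_succ, htop] at this
    simp only [zero_mul, add_zero] at this
    -- this : ∑ j ∈ range (d+1), b j * ρ j * X j
    --        = ∑ i ∈ range (d+1), b (i+1) * ρ (i+1) * X (i+1) + b 0 * ρ 0 * X 0
    rw [this]; ring
  rw [h1, Finset.sum_sub_distrib, h2]
  have h3 : ∑ j ∈ range (d+1), (b j * X (j+1) - b j * (ρ j * X j))
      = ∑ j ∈ range (d+1), b j * X (j+1) - ∑ j ∈ range (d+1), b j * ρ j * X j := by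
    rw [← Finset.sum_sub_distrib]
    exact Finset.sum_congr rfl fun j _ => by ring
  rw [h3]; ring

section Master
variable {q : ℕ} {K : Type*} [Field K]

open Finset in
lemma master (p s : ℕ) [Fact p.Prime] [CharP K p] (hqs : q = p ^ s) (hq2 : 2 ≤ q)
    (d : ℕ) (c : ℕ → K) (r aa β : K) :
    ∑ i ∈ Finset.range (d+2), c i * aa ^ ((q^i - 1)/(q - 1)) * β ^ q ^ i
      = ∑ j ∈ Finset.range (d+1),
          bseq q c r d j * aa ^ ((q^j - 1)/(q - 1)) * (aa * β ^ q - r * β) ^ q ^ j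
        + (c 0 + bseq q c r d 0 * r) * β := by
  set b := bseq q c r d with hbdef
  set X : ℕ → K := fun i => aa ^ ((q^i - 1)/(q - 1)) * β ^ q ^ i with hXdef
  have hX0 : X 0 = β := by
    simp [hXdef]
  have hterm : ∀ j, aa ^ ((q^j - 1)/(q - 1)) * (aa * β ^ q - r * β) ^ q ^ j
      = X (j+1) - r ^ q ^ j * X j := by
    intro j
    rw [aux_pow_q_sub (q := q) p s hqs, mul_pow, mul_pow, ← pow_mul]
    have e1 : q * q ^ j = q ^ (j+1) := by rw [pow_succ, mul_comm]
    rw [e1]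
    have e2 : aa ^ ((q^j - 1)/(q - 1)) * aa ^ q ^ j = aa ^ ((q^(j+1) - 1)/(q - 1)) := by
      rw [← pow_add, texp_succ hq2]
    simp only [hXdef]
    rw [mul_sub, ← mul_assoc, e2]
    ring
  have htel := telescope d c b (fun j => r ^ q ^ j) X
    (fun i hi => by rw [hbdef, bseq_le c r hi]; ring)
    (bseq_gt c r (Nat.lt_succ_self d))
  calc ∑ i ∈ Finset.range (d+2), c i * aa ^ ((q^i - 1)/(q - 1)) * β ^ q ^ i
      = ∑ i ∈ Finset.range (d+2), c i * X i := by
        refine Finset.sum_congr rfl fun i _ => by rw [hXdef]; ring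
    _ = ∑ j ∈ Finset.range (d+1), (b j * X (j+1) - b j * (r ^ q ^ j * X j))
        + (c 0 + b 0 * r ^ q ^ 0) * X 0 := htel
    _ = _ := by
        rw [hX0]
        simp only [pow_zero, pow_one]
        congr 1
        refine Finset.sum_congr rfl fun j _ => ?_
        rw [mul_assoc (b j), hterm j]
        ring

end Master

open Finset in
lemma key {q : ℕ} {Fq K : Type*} [Field Fq] [Fintype Fq] [Field K] [Algebra Fq K]
    (hq : Fintype.card Fq = q) (p s : ℕ) [Fact p.Prime] [CharP K p] (hqs : q = p ^ s)
    {ℓ : ℕ} (a : Fin ℓ → K) (ha : ∀ l, a l ≠ 0)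
    (hconj : ∀ l l', l ≠ l' → ∀ c : K, c ≠ 0 → a l ≠ c ^ (q - 1) * a l')
    (d : ℕ) :
    ∀ (c : ℕ → K), (∃ i, i ≤ d ∧ c i ≠ 0) →
      ∀ (k : Fin ℓ → ℕ) (v : ∀ l, Fin (k l) → K), (∀ l, LinearIndependent Fq (v l)) →
        (∀ l t, ∑ i ∈ range (d+1), c i * (a l) ^ ((q^i - 1)/(q - 1)) * (v l t) ^ q ^ i = 0) →
        ∑ l, k l ≤ d := by
  classical
  have hq2 : 2 ≤ q := hq ▸ Fintype.one_lt_card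
  induction d with
  | zero =>
    intro c hc k v hv hroot
    obtain ⟨i, hi, hci⟩ := hc
    interval_cases i
    have hzero : ∀ l, k l = 0 := by
      intro l
      by_contra h
      have ht : 0 < k l := Nat.pos_of_ne_zero h
      have := hroot l ⟨0, ht⟩
      rw [Finset.sum_range_one] at this
      norm_num at this
      rcases this with h1 | h1
      · exact hci h1
      · exact (hv l).ne_zero ⟨0, ht⟩ h1
    rw [Finset.sum_eq_zero fun l _ => hzero l]
  | succ d ih =>
    intro c hc k v hv hroot
    by_cases hk : ∀ l, k l = 0
    · rw [Finset.sum_eq_zero fun l _ => hk l]; omega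
    push_neg at hk
    obtain ⟨l₀, hl₀⟩ := hk
    have hk0 : 1 ≤ k l₀ := Nat.one_le_iff_ne_zero.mpr hl₀
    set last : Fin (k l₀) := ⟨k l₀ - 1, by omega⟩ with hlast
    set β₀ : K := v l₀ last with hβ₀def
    have hβ₀ : β₀ ≠ 0 := (hv l₀).ne_zero last
    set r : K := a l₀ * β₀ ^ (q - 1) with hrdef
    set b : ℕ → K := bseq q c r d with hbdef
    have hmain : ∀ aa β : K,
        ∑ i ∈ range (d+2), c i * aa ^ ((q^i - 1)/(q - 1)) * β ^ q ^ i
          = ∑ j ∈ range (d+1), b j * aa ^ ((q^j - 1)/(q - 1)) * (aa * β ^ q - r * β) ^ q ^ j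
            + (c 0 + b 0 * r) * β := fun aa β => master p s hqs hq2 d c r aa β
    have hT0 : a l₀ * β₀ ^ q - r * β₀ = 0 := by
      have hpow : β₀ ^ (q - 1) * β₀ = β₀ ^ q := by
        rw [← pow_succ]; congr 1; omega
      rw [hrdef]
      calc a l₀ * β₀ ^ q - a l₀ * β₀ ^ (q-1) * β₀
          = a l₀ * β₀ ^ q - a l₀ * (β₀ ^ (q-1) * β₀) := by ring
        _ = 0 := by rw [hpow, sub_self]
    have hc0 : c 0 + b 0 * r = 0 := by
      have h := hmain (a l₀) β₀
      rw [hroot l₀ last, hT0] at h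
      have hzero : ∀ j ∈ range (d+1),
          b j * a l₀ ^ ((q^j - 1)/(q - 1)) * (0:K) ^ q ^ j = 0 := by
        intro j _
        rw [zero_pow (by positivity : q ^ j ≠ 0), mul_zero]
      rw [Finset.sum_eq_zero hzero, zero_add] at h
      rcases mul_eq_zero.mp h.symm with h1 | h1
      · exact h1
      · exact absurd h1 hβ₀
    have hroot' : ∀ l (β : K),
        ∑ i ∈ range (d+2), c i * (a l) ^ ((q^i - 1)/(q - 1)) * β ^ q ^ i
          = ∑ j ∈ range (d+1), b j * (a l) ^ ((q^j - 1)/(q - 1)) * (a l * β ^ q - r * β) ^ q ^ j := by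
      intro l β
      rw [hmain (a l) β, hc0, zero_mul, add_zero]
    have hbne : ∃ i, i ≤ d ∧ b i ≠ 0 := by
      by_contra h
      push_neg at h
      have hb0 : ∀ i, b i = 0 := by
        intro i
        by_cases hgt : d < i
        · exact bseq_gt c r hgt
        · exact h i (by omega)
      obtain ⟨i, hi, hci⟩ := hc
      apply hci
      rcases i with _ | j
      · have := hc0
        rw [hb0 0, zero_mul, add_zero] at this
        exact this
      · have := bseq_le (q := q) c r (show j ≤ d by omega)
        rw [← hbdef] at this
        rw [hb0 j, hb0 (j+1), zero_mul, add_zero] at this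
        exact this.symm
    -- the linear maps
    set T : Fin ℓ → (K →ₗ[Fq] K) := fun l => Tmap q hq p s hqs (a l) r with hTdef
    have hTapp : ∀ l (x : K), T l x = a l * x ^ q - r * x := fun l x => rfl
    set k' : Fin ℓ → ℕ := fun l => if l = l₀ then k l₀ - 1 else k l with hk'def
    have hk'le : ∀ l, k' l ≤ k l := by
      intro l
      by_cases h : l = l₀
      · subst h; simp [hk'def]
      · simp [hk'def, h]
    set emb : ∀ l, Fin (k' l) → Fin (k l) :=
      fun l t => ⟨t.1, lt_of_lt_of_le t.2 (hk'le l)⟩ with hembdef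
    set v' : ∀ l, Fin (k' l) → K := fun l t => T l (v l (emb l t)) with hv'def
    have hTinj : ∀ l, l ≠ l₀ → LinearMap.ker (T l) = ⊥ := by
      intro l hne
      rw [LinearMap.ker_eq_bot']
      intro x hx
      by_contra hx0
      rw [hTapp] at hx
      have hxq : x ^ q = x ^ (q-1) * x := by rw [← pow_succ]; congr 1; omega
      have heq : a l = (β₀ * x⁻¹) ^ (q - 1) * a l₀ := by
        have hx1 : a l * x ^ (q-1) * x = a l₀ * β₀ ^ (q-1) * x := by
          rw [mul_assoc, ← hxq]; rw [sub_eq_zero] at hx; rw [hx, hrdef]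
        have hx' : a l * x ^ (q-1) = a l₀ * β₀ ^ (q-1) :=
          mul_right_cancel₀ hx0 hx1
        rw [mul_pow, inv_pow]
        have hxpow : (x : K) ^ (q-1) ≠ 0 := pow_ne_zero _ hx0
        field_simp
        linear_combination hx'
      exact hconj l l₀ hne (β₀ * x⁻¹) (by
        apply mul_ne_zero hβ₀ (inv_ne_zero hx0)) heq
    have hker : LinearMap.ker (T l₀) ≤ Submodule.span Fq {β₀} := by
      intro x hx
      rw [LinearMap.mem_ker, hTapp] at hx
      by_cases hx0 : x = 0
      · rw [hx0]; exact Submodule.zero_mem _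
      have hxq : x ^ q = x ^ (q-1) * x := by rw [← pow_succ]; congr 1; omega
      have h1 : (x * β₀⁻¹) ^ (q - 1) = 1 := by
        rw [sub_eq_zero, hrdef] at hx
        rw [hxq, ← mul_assoc] at hx
        have h2 : x ^ (q-1) = β₀ ^ (q-1) := by
          have h3 := mul_right_cancel₀ hx0 hx
          exact mul_left_cancel₀ (ha l₀) h3
        rw [mul_pow, h2, inv_pow, mul_inv_cancel₀ (pow_ne_zero _ hβ₀)]
      obtain ⟨cc, hcc⟩ := aux_root_unity hq h1
      have hxeq : x = cc • β₀ := by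
        rw [Algebra.smul_def, hcc]
        field_simp
      rw [hxeq]
      exact Submodule.smul_mem _ _ (Submodule.mem_span_singleton_self β₀)
    have hv' : ∀ l, LinearIndependent Fq (v' l) := by
      intro l
      have hembinj : Function.Injective (emb l) := by
        intro x y hxy
        rwa [hembdef, Fin.mk.injEq, ← Fin.ext_iff] at hxy
      have hbase : LinearIndependent Fq (v l ∘ emb l) := (hv l).comp _ hembinj
      by_cases hl : l₀ = l
      · subst hl
        refine hbase.map ?_
        have hrange : Set.range (v l₀ ∘ emb l₀) = v l₀ '' Set.range (emb l₀) :=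
          Set.range_comp _ _
        rw [hrange]
        have hsing : ({β₀} : Set K) = v l₀ '' {last} := by
          rw [Set.image_singleton, hβ₀def]
        have hdisjidx : Disjoint (Set.range (emb l₀)) ({last} : Set (Fin (k l₀))) := by
          rw [Set.disjoint_singleton_right]
          rintro ⟨t, ht⟩
          have h1 : (t : ℕ) = k l₀ - 1 := congrArg Fin.val ht
          have h2 : (t : ℕ) < k' l₀ := t.2
          have h3 : k' l₀ = k l₀ - 1 := by simp [hk'def]
          omega
        have hdisj := (hv l₀).disjoint_span_image hdisjidx
        refine Disjoint.mono_right ?_ hdisj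
        exact hsing ▸ hker
      · exact hbase.map' (T l) (hTinj l fun h => hl h.symm)
    have hroot'' : ∀ l t,
        ∑ j ∈ range (d+1), b j * (a l) ^ ((q^j - 1)/(q - 1)) * (v' l t) ^ q ^ j = 0 := by
      intro l t
      have h := hroot' l (v l (emb l t))
      rw [hroot l (emb l t)] at h
      rw [hv'def]
      simp only [hTapp]
      exact h.symm
    have hsum := ih b hbne k' v' hv' hroot''
    have hsum_eq : ∑ l, k l = ∑ l, k' l + 1 := by
      rw [← Finset.sum_erase_add Finset.univ k (Finset.mem_univ l₀),
        ← Finset.sum_erase_add Finset.univ k' (Finset.mem_univ l₀)]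
      have h1 : ∑ l ∈ Finset.univ.erase l₀, k' l = ∑ l ∈ Finset.univ.erase l₀, k l :=
        Finset.sum_congr rfl fun l hl => by
          rw [hk'def]; simp [Finset.ne_of_mem_erase hl]
      rw [h1]
      have h2 : k' l₀ = k l₀ - 1 := by rw [hk'def]; simp
      omega
    omega

lemma locator_term {q : ℕ} {K : Type*} [Field K] (hq2 : 2 ≤ q) (aa β : K) (i : ℕ) :
    (aa * β ^ (q-1)) ^ ((q^i - 1)/(q - 1)) * β = aa ^ ((q^i - 1)/(q-1)) * β ^ q ^ i := by
  rw [mul_pow, ← pow_mul, texp_mul hq2, mul_assoc, ← pow_succ]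
  congr 2
  have := Nat.one_le_pow i q (by omega)
  omega

/-- P-independence of the linearized Reed–Solomon code locators: if `a_1, …, a_ℓ` are
nonzero and pairwise non-σ-conjugate, and in each block the column multipliers
`β_{l,1}, …, β_{l,n_l}` are `F_q`-linearly independent, then the `n×n` σ-Vandermonde
matrix of the code locators `a_l β_{l,t}^{q−1}` (row `i ∈ {0,…,n−1}` containing the
truncated norms `N_i(a_l β_{l,t}^{q−1})`) has full rank `n`, i.e. it is invertible. -/
theorem LRS_locators_Pindependent
    (q m ℓ : ℕ) (nn : Fin ℓ → ℕ) (hℓ : 1 ≤ ℓ) (hnn : ∀ l, 1 ≤ nn l)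
    (Fq K : Type*) [Field Fq] [Fintype Fq] (hq : Fintype.card Fq = q)
    [Field K] [Algebra Fq K] (hm : Module.finrank Fq K = m)
    (a : Fin ℓ → K) (ha : ∀ l, a l ≠ 0)
    (hconj : ∀ l l', l ≠ l' → ∀ c : K, c ≠ 0 → a l ≠ c ^ (q - 1) * a l')
    (β : (l : Fin ℓ) → Fin (nn l) → K) (hβ : ∀ l, LinearIndependent Fq (β l)) :
    (Matrix.of fun (i : Fin (∑ l, nn l)) (j : (l : Fin ℓ) × Fin (nn l)) =>
      (a j.1 * β j.1 j.2 ^ (q - 1)) ^ ((q ^ (i : ℕ) - 1) / (q - 1))).rank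
      = ∑ l, nn l := by
  classical
  set n := ∑ l, nn l with hndef
  have hq2 : 2 ≤ q := hq ▸ Fintype.one_lt_card
  haveI : CharP Fq (ringChar Fq) := ringChar.charP Fq
  obtain ⟨sn, hp, hcard⟩ := FiniteField.card Fq (ringChar Fq)
  haveI : Fact (ringChar Fq).Prime := ⟨hp⟩
  haveI : CharP K (ringChar Fq) :=
    charP_of_injective_algebraMap (algebraMap Fq K).injective (ringChar Fq)
  have hqs : q = ringChar Fq ^ (sn : ℕ) := by rw [← hq, hcard]
  have hn1 : 1 ≤ n := le_trans (hnn ⟨0, hℓ⟩)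
    (Finset.single_le_sum (fun _ _ => Nat.zero_le _) (Finset.mem_univ _))
  have hrows : LinearIndependent K
      (Matrix.of fun (i : Fin n) (j : (l : Fin ℓ) × Fin (nn l)) =>
        (a j.1 * β j.1 j.2 ^ (q - 1)) ^ ((q ^ (i : ℕ) - 1) / (q - 1))) := by
    refine Fintype.linearIndependent_iff.mpr ?_
    intro g hg
    by_contra hgne
    push_neg at hgne
    obtain ⟨i0, hi0⟩ := hgne
    set c : ℕ → K := fun i => if h : i < n then g ⟨i, h⟩ else 0 with hcdef
    have hceq : ∀ i : Fin n, c (i : ℕ) = g i := by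
      intro i
      simp [hcdef, i.isLt]
    have hroots : ∀ (l : Fin ℓ) (t : Fin (nn l)),
        ∑ i ∈ Finset.range ((n-1)+1),
          c i * a l ^ ((q^i - 1)/(q - 1)) * (β l t) ^ q ^ i = 0 := by
      intro l t
      have h0 := congrFun hg ⟨l, t⟩
      simp only [Finset.sum_apply, Pi.smul_apply, Pi.zero_apply, smul_eq_mul,
        Matrix.of_apply] at h0
      have hrange : (n-1)+1 = n := by omega
      rw [hrange, Finset.sum_range fun i =>
        c i * a l ^ ((q^i - 1)/(q - 1)) * (β l t) ^ q ^ i]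
      calc ∑ i : Fin n, c (i:ℕ) * a l ^ ((q^(i:ℕ) - 1)/(q - 1)) * (β l t) ^ q ^ (i:ℕ)
          = ∑ i : Fin n, g i * ((a l * β l t ^ (q-1)) ^ ((q^(i:ℕ) - 1)/(q - 1)) * β l t) := by
            refine Finset.sum_congr rfl fun i _ => ?_
            rw [hceq i, locator_term hq2, mul_assoc]
        _ = (∑ i : Fin n, g i * (a l * β l t ^ (q-1)) ^ ((q^(i:ℕ) - 1)/(q - 1))) * β l t := by
            rw [Finset.sum_mul]
            exact Finset.sum_congr rfl fun i _ => by ring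
        _ = 0 := by rw [h0, zero_mul]
    have hkey := key hq (ringChar Fq) sn hqs a ha hconj (n-1) c
      ⟨(i0 : ℕ), by omega, by rw [hceq i0]; exact hi0⟩ nn β hβ hroots
    omega
  rw [hrows.rank_matrix, Fintype.card_fin]
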